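/- Let N ≥ 1 and M ≥ 3 be integers, let α₁, …, α_N be integers, and let f, g ∈ ℤ[X,Y]. If ∏_{j=1}^{N} (X + αⱼ·Y) = f·X^N + g·Y^M in ℤ[X,Y], then αⱼ = 0 for every j. -/

import Mathlib

open MvPolynomial

private lemma aux_e2 {ι : Type*} [DecidableEq ι] (s : Finset ι) (r : ι → ℤ) :
    2 * ∑ t ∈ s.powersetCard 2, ∏ i ∈ t, r i
      = (∑ i ∈ s, r i) ^ 2 - ∑ i ∈ s, r i ^ 2 := by
  induction s using Finset.induction_on with
  | empty =>
    rw [Finset.powersetCard_eq_empty.mpr (by simp)]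
    simp
  | insert a s ha ih =>
    rw [show (2:ℕ) = 1 + 1 from rfl, Finset.powersetCard_succ_insert ha]
    have hdisj : Disjoint (s.powersetCard (1+1)) ((s.powersetCard 1).image (insert a)) := by
      rw [Finset.disjoint_left]
      intro t ht ht'
      have hts : t ⊆ s := (Finset.mem_powersetCard.mp ht).1
      obtain ⟨u, _, rfl⟩ := Finset.mem_image.mp ht'
      exact ha (hts (Finset.mem_insert_self a u))
    rw [Finset.sum_union hdisj]
    have hinj : ∀ u ∈ s.powersetCard 1, ∀ v ∈ s.powersetCard 1,
        insert a u = insert a v → u = v := by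
      intro u hu v hv huv
      have hau : a ∉ u := fun h => ha ((Finset.mem_powersetCard.mp hu).1 h)
      have hav : a ∉ v := fun h => ha ((Finset.mem_powersetCard.mp hv).1 h)
      rw [← Finset.erase_insert hau, ← Finset.erase_insert hav, huv]
    rw [Finset.sum_image hinj]
    have himg : ∑ t ∈ s.powersetCard 1, ∏ i ∈ insert a t, r i
        = r a * ∑ i ∈ s, r i := by
      rw [Finset.powersetCard_one, Finset.sum_map, Finset.mul_sum]
      refine Finset.sum_congr rfl fun j hj => ?_
      have haj : a ∉ ({j} : Finset ι) := by
        simp only [Finset.mem_singleton]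
        rintro rfl; exact ha hj
      rw [Function.Embedding.coeFn_mk, Finset.prod_insert haj, Finset.prod_singleton]
    rw [himg, Finset.sum_insert ha, Finset.sum_insert ha]
    ring_nf
    ring_nf at ih
    linarith [ih]

theorem stmt_13 (N M : ℕ) (hN : 1 ≤ N) (hM : 3 ≤ M) (α : Fin N → ℤ)
    (f g : MvPolynomial (Fin 2) ℤ)
    (h : ∏ j, (X 0 + C (α j) * X 1) = f * X 0 ^ N + g * X 1 ^ M) :
    ∀ j, α j = 0 := by
  classical
  have h1 : (1 : Fin 2) = Fin.succ 0 := rfl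
  have hCα : ∀ a : ℤ, finSuccEquiv ℤ 1 (C a) = Polynomial.C (C a) := by
    intro a
    rw [finSuccEquiv_apply, eval₂Hom_C, RingHom.comp_apply]
  have h' : ∏ j, (Polynomial.X + Polynomial.C (C (α j) * X (0 : Fin 1)))
      = (finSuccEquiv ℤ 1 f) * Polynomial.X ^ N
        + (finSuccEquiv ℤ 1 g) * Polynomial.C (X (0 : Fin 1)) ^ M := by
    have hh := congrArg (finSuccEquiv ℤ 1) h
    rw [map_prod, map_add, map_mul, map_mul, map_pow, map_pow,
      finSuccEquiv_X_zero, h1, finSuccEquiv_X_succ] at hh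
    rw [← hh]
    refine Finset.prod_congr rfl fun j _ => ?_
    simp only [h1, map_add, map_mul, finSuccEquiv_X_zero, finSuccEquiv_X_succ, hCα,
      Polynomial.C_mul]
  set F := finSuccEquiv ℤ 1 f
  set G := finSuccEquiv ℤ 1 g
  have key : ∀ k : ℕ, 0 < k → k < M → k ≤ N →
      (∑ t ∈ (Finset.univ : Finset (Fin N)).powersetCard k, ∏ i ∈ t, α i) = 0 := by
    intro k hk0 hkM hkN
    have hc := congrArg (fun p => Polynomial.coeff p (N - k)) h'
    simp only [Polynomial.coeff_add] at hc
    have hcard : (Finset.univ : Finset (Fin N)).card = N := by simp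
    have hle : N - k ≤ (Finset.univ : Finset (Fin N)).card := by omega
    rw [Finset.prod_X_add_C_coeff Finset.univ (fun j => C (α j) * X (0 : Fin 1)) hle] at hc
    have hck : (Finset.univ : Finset (Fin N)).card - (N - k) = k := by omega
    rw [hck] at hc
    have hL : ∑ t ∈ (Finset.univ : Finset (Fin N)).powersetCard k,
        ∏ i ∈ t, (C (α i) * X (0 : Fin 1))
        = C (∑ t ∈ (Finset.univ : Finset (Fin N)).powersetCard k, ∏ i ∈ t, α i)
          * X (0 : Fin 1) ^ k := by
      rw [map_sum, Finset.sum_mul]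
      refine Finset.sum_congr rfl fun t ht => ?_
      have htk : t.card = k := (Finset.mem_powersetCard.mp ht).2
      rw [Finset.prod_mul_distrib, Finset.prod_const, htk, map_prod]
    rw [hL] at hc
    rw [Polynomial.coeff_mul_X_pow', if_neg (by omega), ← map_pow,
      Polynomial.coeff_mul_C, zero_add] at hc
    have hc2 := congrArg (MvPolynomial.coeff (Finsupp.single (0 : Fin 1) k)) hc
    rw [X_pow_eq_monomial, coeff_mul_monomial', X_pow_eq_monomial,
      coeff_mul_monomial', if_pos le_rfl, if_neg] at hc2
    · rw [tsub_self, coeff_zero_C, mul_one] at hc2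
      exact hc2
    · intro hle'
      have h0 := hle' 0
      simp only [Finsupp.single_apply, if_pos rfl] at h0
      simp at h0
      omega
  have hE1 : (∑ j, α j) = 0 := by
    have hk := key 1 one_pos (by omega) hN
    rw [Finset.powersetCard_one, Finset.sum_map] at hk
    simpa using hk
  have hE2 : (∑ t ∈ (Finset.univ : Finset (Fin N)).powersetCard 2, ∏ i ∈ t, α i) = 0 := by
    by_cases h2 : 2 ≤ N
    · exact key 2 two_pos (by omega) h2
    · rw [Finset.powersetCard_eq_empty.mpr (by simp; omega), Finset.sum_empty]
  have hsq : ∑ j, (α j) ^ 2 = 0 := by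
    have haux := aux_e2 (Finset.univ : Finset (Fin N)) α
    rw [hE2, hE1] at haux
    linarith
  intro j
  have hz : (α j) ^ 2 = 0 :=
    (Finset.sum_eq_zero_iff_of_nonneg
      (fun i _ => sq_nonneg (α i))).mp hsq j (Finset.mem_univ j)
  exact pow_eq_zero_iff (by norm_num) |>.mp hz
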